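/- arXiv:1805.09163 — 4 statements merged into one kernel-verified Lean document; each statement's English description precedes it below -/
import Mathlib

section
/- Let ε ≠ 0, let V₀ : ℝⁿ → ℝ be twice continuously differentiable, let e : ℝ → ℝⁿ be continuous, t ∈ ℝ, h > 0, and let 𝒜(s) be the operator (𝒜(s)u)(x) = iε (Δu)(x) − i ε⁻¹ ( V₀(x) + e(s)ᵀx ) u(x). Define r(t,h) = (1/h) ∫₀ʰ e(t+ζ) dζ and s(t,h) = 2 ∫₀ʰ (ζ − h/2) e(t+ζ) dζ. Then for every smooth (C⁴) u : ℝⁿ → ℂ and every x ∈ ℝⁿ, the truncated Magnus expansion satisfies, pointwise: ∫₀ʰ (𝒜(t+ζ)u)(x) dζ − (1/2) ∫₀ʰ ∫₀^ζ ( [𝒜(t+ξ), 𝒜(t+ζ)] u )(x) dξ dζ = i h ε (Δu)(x) − i h ε⁻¹ ( V₀(x) + r(t,h)ᵀx ) u(x) − s(t,h)ᵀ (∇u)(x). -/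
open scoped BigOperators

/-- The Laplacian of `u : ℝⁿ → ℂ`, `Δu = ∑ⱼ ∂²u/∂xⱼ²`. -/
noncomputable def laplacian {n : ℕ} (u : (Fin n → ℝ) → ℂ) (x : Fin n → ℝ) : ℂ :=
  ∑ j : Fin n, fderiv ℝ (fun y => fderiv ℝ u y (Pi.single j 1)) x (Pi.single j 1)

/-- The operator `𝒜(s) u = iε Δu − i ε⁻¹ (V₀(x) + e(s)ᵀ x) u`. -/
noncomputable def opA {n : ℕ} (ε : ℝ) (V₀ : (Fin n → ℝ) → ℝ) (e : ℝ → Fin n → ℝ)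
    (s : ℝ) (u : (Fin n → ℝ) → ℂ) (x : Fin n → ℝ) : ℂ :=
  Complex.I * (ε : ℂ) * laplacian u x
    - Complex.I * (ε : ℂ)⁻¹ * ((V₀ x + ∑ j : Fin n, e s j * x j : ℝ) : ℂ) * u x

/-- The averaged laser pulse `r(t,h) = (1/h) ∫₀ʰ e(t+ζ) dζ`. -/
noncomputable def magnusR {n : ℕ} (e : ℝ → Fin n → ℝ) (t h : ℝ) : Fin n → ℝ :=
  (1 / h) • ∫ ζ in (0:ℝ)..h, e (t + ζ)

/-- The drift vector `s(t,h) = 2 ∫₀ʰ (ζ − h/2) e(t+ζ) dζ`. -/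
noncomputable def magnusS {n : ℕ} (e : ℝ → Fin n → ℝ) (t h : ℝ) : Fin n → ℝ :=
  (2 : ℝ) • ∫ ζ in (0:ℝ)..h, (ζ - h / 2) • e (t + ζ)

section Aux

variable {n : ℕ}

lemma contDiff_fderiv_apply {f : (Fin n → ℝ) → ℂ} {m k : WithTop ℕ∞} (hf : ContDiff ℝ k f)
    (hmk : m + 1 ≤ k) (v : Fin n → ℝ) : ContDiff ℝ m (fun y => fderiv ℝ f y v) :=
  (hf.fderiv_right hmk).clm_apply contDiff_const

lemma diffAt_D {f : (Fin n → ℝ) → ℂ} (hf : ContDiff ℝ 2 f) (v x : Fin n → ℝ) :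
    DifferentiableAt ℝ (fun y => fderiv ℝ f y v) x :=
  ((contDiff_fderiv_apply hf (m := 1) (by norm_num) v).differentiable one_ne_zero) x

lemma laplacian_sub {f g : (Fin n → ℝ) → ℂ} (hf : ContDiff ℝ 2 f) (hg : ContDiff ℝ 2 g)
    (x : Fin n → ℝ) :
    laplacian (fun y => f y - g y) x = laplacian f x - laplacian g x := by
  unfold laplacian
  rw [← Finset.sum_sub_distrib]
  refine Finset.sum_congr rfl fun j _ => ?_
  have h1 : (fun y => fderiv ℝ (fun z => f z - g z) y (Pi.single j 1))
      = fun y => fderiv ℝ f y (Pi.single j 1) - fderiv ℝ g y (Pi.single j 1) := by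
    funext y
    rw [fderiv_fun_sub (hf.differentiable (by norm_num) y) (hg.differentiable (by norm_num) y)]
    simp
  rw [h1, fderiv_fun_sub (diffAt_D hf _ x) (diffAt_D hg _ x)]
  simp

lemma laplacian_const_mul {f : (Fin n → ℝ) → ℂ} (hf : ContDiff ℝ 2 f) (a : ℂ)
    (x : Fin n → ℝ) :
    laplacian (fun y => a * f y) x = a * laplacian f x := by
  unfold laplacian
  rw [Finset.mul_sum]
  refine Finset.sum_congr rfl fun j _ => ?_
  have h1 : (fun y => fderiv ℝ (fun z => a * f z) y (Pi.single j 1))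
      = fun y => a * fderiv ℝ f y (Pi.single j 1) := by
    funext y
    rw [fderiv_const_mul (hf.differentiable (by norm_num) y) a]
    simp
  rw [h1, fderiv_const_mul (diffAt_D hf _ x) a]
  simp

/-- The continuous linear map `y ↦ ((∑ j, c j * y j : ℝ) : ℂ)`. -/
noncomputable def linC (c : Fin n → ℝ) : (Fin n → ℝ) →L[ℝ] ℂ :=
  Complex.ofRealCLM.comp (∑ j, c j • ContinuousLinearMap.proj j)

lemma linC_apply (c : Fin n → ℝ) (y : Fin n → ℝ) :
    linC c y = ((∑ j, c j * y j : ℝ) : ℂ) := by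
  simp [linC, ContinuousLinearMap.sum_apply, smul_eq_mul]

lemma linC_single (c : Fin n → ℝ) (j : Fin n) : linC c (Pi.single j 1) = (c j : ℂ) := by
  rw [linC_apply]
  norm_cast
  simp [Pi.single_apply]

lemma laplacian_linC_mul {u : (Fin n → ℝ) → ℂ} (hu : ContDiff ℝ 2 u) (c : Fin n → ℝ)
    (x : Fin n → ℝ) :
    laplacian (fun y => linC c y * u y) x
      = linC c x * laplacian u x
        + 2 * ∑ j, (c j : ℂ) * fderiv ℝ u x (Pi.single j 1) := by
  have hud := hu.differentiable (by norm_num)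
  have key : ∀ j : Fin n,
      fderiv ℝ (fun y => fderiv ℝ (fun z => linC c z * u z) y (Pi.single j 1)) x
        (Pi.single j 1)
      = linC c x * fderiv ℝ (fun y => fderiv ℝ u y (Pi.single j 1)) x (Pi.single j 1)
        + 2 * ((c j : ℂ) * fderiv ℝ u x (Pi.single j 1)) := by
    intro j
    have h1 : (fun y => fderiv ℝ (fun z => linC c z * u z) y (Pi.single j 1))
        = fun y => linC c y * fderiv ℝ u y (Pi.single j 1) + (c j : ℂ) * u y := by
      funext y
      rw [fderiv_fun_mul ((linC c).differentiable y) (hud y)]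
      simp [ContinuousLinearMap.fderiv, linC_single, mul_comm]
    rw [h1]
    have hd1 : DifferentiableAt ℝ (fun y => linC c y * fderiv ℝ u y (Pi.single j 1)) x :=
      ((linC c).differentiable x).mul (diffAt_D hu _ x)
    have hd2 : DifferentiableAt ℝ (fun y => (c j : ℂ) * u y) x :=
      (differentiableAt_const _).mul (hud x)
    rw [fderiv_fun_add hd1 hd2, fderiv_fun_mul ((linC c).differentiable x) (diffAt_D hu _ x),
      fderiv_const_mul (hud x) _]
    simp [ContinuousLinearMap.fderiv, linC_single]
    ring
  unfold laplacian
  simp only [key]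
  rw [Finset.sum_add_distrib, ← Finset.mul_sum, ← Finset.mul_sum]

lemma contDiff_laplacian {f : (Fin n → ℝ) → ℂ} {m : WithTop ℕ∞} (hf : ContDiff ℝ (m + 2) f) :
    ContDiff ℝ m (fun x => laplacian f x) := by
  unfold laplacian
  refine ContDiff.sum fun j _ => ?_
  refine contDiff_fderiv_apply (contDiff_fderiv_apply hf ?_ _) le_rfl _
  exact le_of_eq (by rw [add_assoc, one_add_one_eq_two])

lemma contDiff_affine (V₀ : (Fin n → ℝ) → ℝ) (hV : ContDiff ℝ 2 V₀) (c : Fin n → ℝ) :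
    ContDiff ℝ 2 (fun y : Fin n → ℝ => ((V₀ y + ∑ j, c j * y j : ℝ) : ℂ)) :=
  Complex.ofRealCLM.contDiff.comp (hV.add (ContDiff.sum fun j _ =>
    contDiff_const.mul (ContinuousLinearMap.proj (R := ℝ) (φ := fun _ : Fin n => ℝ) j).contDiff))

lemma opA_contDiff (ε : ℝ) (V₀ : (Fin n → ℝ) → ℝ) (hV : ContDiff ℝ 2 V₀)
    (e : ℝ → Fin n → ℝ) (s : ℝ) {u : (Fin n → ℝ) → ℂ} (hu : ContDiff ℝ 4 u) :
    ContDiff ℝ 2 (fun y => opA ε V₀ e s u y) := by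
  unfold opA
  exact (contDiff_const.mul (contDiff_laplacian (hu.of_le (by norm_num)))).sub
    ((contDiff_const.mul (contDiff_affine V₀ hV (e s))).mul (hu.of_le (by norm_num)))

lemma opA_comm (ε : ℝ) (hε : ε ≠ 0) (V₀ : (Fin n → ℝ) → ℝ) (hV : ContDiff ℝ 2 V₀)
    (e : ℝ → Fin n → ℝ) {u : (Fin n → ℝ) → ℂ} (hu : ContDiff ℝ 4 u) (s₁ s₂ : ℝ)
    (x : Fin n → ℝ) :
    opA ε V₀ e s₁ (opA ε V₀ e s₂ u) x - opA ε V₀ e s₂ (opA ε V₀ e s₁ u) x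
      = 2 * ∑ j, ((e s₂ j - e s₁ j : ℝ) : ℂ) * fderiv ℝ u x (Pi.single j 1) := by
  have hεC : (ε : ℂ) ≠ 0 := Complex.ofReal_ne_zero.mpr hε
  have hu2 : ContDiff ℝ 2 u := hu.of_le (by norm_num)
  have hw1 := opA_contDiff ε V₀ hV e s₁ hu
  have hw2 := opA_contDiff ε V₀ hV e s₂ hu
  set S : ℂ := ∑ j, ((e s₂ j - e s₁ j : ℝ) : ℂ) * fderiv ℝ u x (Pi.single j 1) with hS
  have hdiff : (fun y => opA ε V₀ e s₂ u y - opA ε V₀ e s₁ u y)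
      = fun y => (-(Complex.I * (ε : ℂ)⁻¹))
          * (linC (fun j => e s₂ j - e s₁ j) y * u y) := by
    funext y
    simp only [opA, linC_apply]
    push_cast [Finset.sum_sub_distrib, sub_mul]
    ring
  have hmul : ContDiff ℝ 2 (fun y => linC (fun j => e s₂ j - e s₁ j) y * u y) :=
    (linC _).contDiff.mul hu2
  have hlapdiff : laplacian (opA ε V₀ e s₂ u) x - laplacian (opA ε V₀ e s₁ u) x
      = -(Complex.I * (ε : ℂ)⁻¹)
          * (((∑ j, (e s₂ j - e s₁ j) * x j : ℝ) : ℂ) * laplacian u x + 2 * S) := by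
    rw [← laplacian_sub hw2 hw1 x, hdiff, laplacian_const_mul hmul _ x,
      laplacian_linC_mul hu2 _ x, linC_apply]
  have hPdiff : ((V₀ x + ∑ j, e s₂ j * x j : ℝ) : ℂ) - ((V₀ x + ∑ j, e s₁ j * x j : ℝ) : ℂ)
      = ((∑ j, (e s₂ j - e s₁ j) * x j : ℝ) : ℂ) := by
    push_cast [Finset.sum_sub_distrib, sub_mul]
    ring
  have hinv : (ε : ℂ) * (ε : ℂ)⁻¹ = 1 := mul_inv_cancel₀ hεC
  have hI : Complex.I * Complex.I = -1 := Complex.I_mul_I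
  simp only [opA]
  linear_combination (Complex.I * (ε : ℂ)) * hlapdiff
    + (Complex.I * Complex.I * (ε : ℂ) * (ε : ℂ)⁻¹ * laplacian u x) * hPdiff
    + (-2 * S * Complex.I * Complex.I) * hinv
    + (-2 * S) * hI

/-! ### Integral auxiliary lemmas -/

lemma cont_primitive {φ : ℝ → ℝ} (hφ : Continuous φ) :
    Continuous fun b => ∫ ξ in (0:ℝ)..b, φ ξ := by
  refine continuous_iff_continuousAt.mpr fun ζ => ?_
  exact (intervalIntegral.integral_hasDerivAt_right (hφ.intervalIntegrable _ _)
    (hφ.stronglyMeasurableAtFilter _ _) hφ.continuousAt).continuousAt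

lemma inner_eq {φ : ℝ → ℝ} (hφ : Continuous φ) (ζ : ℝ) :
    (∫ ξ in (0:ℝ)..ζ, (φ ζ - φ ξ)) = ζ * φ ζ - ∫ ξ in (0:ℝ)..ζ, φ ξ := by
  rw [intervalIntegral.integral_sub intervalIntegrable_const (hφ.intervalIntegrable _ _),
    intervalIntegral.integral_const]
  simp [smul_eq_mul]

lemma double_integral_aux {φ : ℝ → ℝ} (hφ : Continuous φ) (h : ℝ) :
    (∫ ζ in (0:ℝ)..h, ∫ ξ in (0:ℝ)..ζ, (φ ζ - φ ξ))
      = ∫ ζ in (0:ℝ)..h, (2 * ζ - h) * φ ζ := by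
  have hF : ∀ ζ : ℝ, HasDerivAt (fun b => ∫ ξ in (0:ℝ)..b, φ ξ) (φ ζ) ζ := fun ζ =>
    intervalIntegral.integral_hasDerivAt_right (hφ.intervalIntegrable _ _)
      (hφ.stronglyMeasurableAtFilter _ _) hφ.continuousAt
  have hFc : Continuous fun b => ∫ ξ in (0:ℝ)..b, φ ξ := cont_primitive hφ
  have hc1 : Continuous fun ζ : ℝ => (ζ - h) * φ ζ := by fun_prop
  have hc2 : Continuous fun ζ : ℝ => ζ * φ ζ := by fun_prop
  have hG : ∀ ζ ∈ Set.uIcc (0:ℝ) h,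
      HasDerivAt (fun b => (b - h) * ∫ ξ in (0:ℝ)..b, φ ξ)
        ((∫ ξ in (0:ℝ)..ζ, φ ξ) + (ζ - h) * φ ζ) ζ := by
    intro ζ _
    have := ((hasDerivAt_id ζ).sub_const h).mul (hF ζ)
    simp only [id_eq, one_mul] at this
    exact this
  have hInt : ∫ ζ in (0:ℝ)..h, ((∫ ξ in (0:ℝ)..ζ, φ ξ) + (ζ - h) * φ ζ)
      = (h - h) * (∫ ξ in (0:ℝ)..h, φ ξ) - (0 - h) * ∫ ξ in (0:ℝ)..(0:ℝ), φ ξ :=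
    intervalIntegral.integral_eq_sub_of_hasDerivAt hG
      ((hFc.add hc1).intervalIntegrable _ _)
  rw [intervalIntegral.integral_add (hFc.intervalIntegrable _ _)
    (hc1.intervalIntegrable _ _)] at hInt
  simp only [intervalIntegral.integral_same, mul_zero, sub_self, zero_mul, zero_sub,
    zero_mul, neg_zero, sub_zero] at hInt
  have h1 : (∫ ζ in (0:ℝ)..h, ∫ ξ in (0:ℝ)..ζ, φ ξ)
      = - ∫ ζ in (0:ℝ)..h, (ζ - h) * φ ζ := by linarith
  have h2 : (∫ ζ in (0:ℝ)..h, ∫ ξ in (0:ℝ)..ζ, (φ ζ - φ ξ))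
      = (∫ ζ in (0:ℝ)..h, ζ * φ ζ) - ∫ ζ in (0:ℝ)..h, ∫ ξ in (0:ℝ)..ζ, φ ξ := by
    have heq : ∀ ζ : ℝ, (∫ ξ in (0:ℝ)..ζ, (φ ζ - φ ξ))
        = ζ * φ ζ - ∫ ξ in (0:ℝ)..ζ, φ ξ := inner_eq hφ
    simp only [heq]
    exact intervalIntegral.integral_sub (hc2.intervalIntegrable _ _)
      (hFc.intervalIntegrable _ _)
  have h3 : ∫ ζ in (0:ℝ)..h, (2 * ζ - h) * φ ζ
      = (∫ ζ in (0:ℝ)..h, ζ * φ ζ) + ∫ ζ in (0:ℝ)..h, (ζ - h) * φ ζ := by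
    rw [← intervalIntegral.integral_add (hc2.intervalIntegrable _ _)
      (hc1.intervalIntegrable _ _)]
    apply intervalIntegral.integral_congr
    intro ζ _
    ring
  rw [h2, h1, h3]
  ring

lemma intervalIntegral_pi_apply {f : ℝ → Fin n → ℝ} (hf : Continuous f) (a b : ℝ)
    (j : Fin n) : (∫ ζ in a..b, f ζ) j = ∫ ζ in a..b, f ζ j := by
  have := (ContinuousLinearMap.proj (R := ℝ) (φ := fun _ : Fin n => ℝ)
    j).intervalIntegral_comp_comm (μ := MeasureTheory.volume) (hf.intervalIntegrable a b)
  simpa using this.symm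

end Aux

/-- The truncated Magnus expansion
`Θ₂ = ∫₀ʰ 𝒜(t+ζ) dζ − ½ ∫₀ʰ∫₀^ζ [𝒜(t+ξ), 𝒜(t+ζ)] dξ dζ` equals, pointwise,
`i h ε Δu − i h ε⁻¹ (V₀ + r(t,h)ᵀ x) u − s(t,h)ᵀ ∇u`. -/
theorem magnus_two_term_eq {n : ℕ} (ε : ℝ) (hε : ε ≠ 0)
    (V₀ : (Fin n → ℝ) → ℝ) (hV : ContDiff ℝ 2 V₀)
    (e : ℝ → Fin n → ℝ) (he : Continuous e) (t h : ℝ) (hh : 0 < h)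
    (u : (Fin n → ℝ) → ℂ) (hu : ContDiff ℝ 4 u) (x : Fin n → ℝ) :
    (∫ ζ in (0:ℝ)..h, opA ε V₀ e (t + ζ) u x)
      - (1 / 2 : ℂ) * ∫ ζ in (0:ℝ)..h, ∫ ξ in (0:ℝ)..ζ,
          (opA ε V₀ e (t + ξ) (opA ε V₀ e (t + ζ) u) x
            - opA ε V₀ e (t + ζ) (opA ε V₀ e (t + ξ) u) x)
      = Complex.I * (h : ℂ) * (ε : ℂ) * laplacian u x
          - Complex.I * (h : ℂ) * (ε : ℂ)⁻¹
              * ((V₀ x + ∑ j : Fin n, magnusR e t h j * x j : ℝ) : ℂ) * u x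
          - ∑ j : Fin n, ((magnusS e t h j : ℝ) : ℂ) * fderiv ℝ u x (Pi.single j 1) := by
  have hεC : (ε : ℂ) ≠ 0 := Complex.ofReal_ne_zero.mpr hε
  have hhne : h ≠ 0 := hh.ne'
  have hhC : (h : ℂ) ≠ 0 := Complex.ofReal_ne_zero.mpr hhne
  have het : Continuous fun ζ : ℝ => e (t + ζ) :=
    he.comp (continuous_const.add continuous_id)
  have hej : ∀ j : Fin n, Continuous fun ζ : ℝ => e (t + ζ) j := fun j =>
    (continuous_apply j).comp het
  -- first term
  have hPcont : Continuous fun ζ : ℝ => V₀ x + ∑ j, e (t + ζ) j * x j :=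
    continuous_const.add (continuous_finset_sum _ fun j _ => (hej j).mul continuous_const)
  have hPint : (∫ ζ in (0:ℝ)..h, (V₀ x + ∑ j, e (t + ζ) j * x j))
      = h * V₀ x + ∑ j, (∫ ζ in (0:ℝ)..h, e (t + ζ) j) * x j := by
    rw [intervalIntegral.integral_add intervalIntegrable_const
        ((continuous_finset_sum _ fun j _ =>
          (hej j).mul continuous_const : Continuous fun ζ => ∑ j, e (t + ζ) j * x j).intervalIntegrable _ _),
      intervalIntegral.integral_const,
      intervalIntegral.integral_finset_sum (f := fun j ζ => e (t + ζ) j * x j)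
        (fun j _ => ((hej j).mul continuous_const).intervalIntegrable _ _)]
    simp only [intervalIntegral.integral_mul_const, smul_eq_mul, sub_zero]
  have hterm1 : (∫ ζ in (0:ℝ)..h, opA ε V₀ e (t + ζ) u x)
      = (h : ℂ) * (Complex.I * (ε : ℂ) * laplacian u x)
        - ((h * V₀ x + ∑ j, (∫ ζ in (0:ℝ)..h, e (t + ζ) j) * x j : ℝ) : ℂ)
            * (Complex.I * (ε : ℂ)⁻¹ * u x) := by
    have hrw : ∀ ζ : ℝ, opA ε V₀ e (t + ζ) u x
        = Complex.I * (ε : ℂ) * laplacian u x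
          - ((V₀ x + ∑ j, e (t + ζ) j * x j : ℝ) : ℂ)
              * (Complex.I * (ε : ℂ)⁻¹ * u x) := by
      intro ζ
      simp only [opA]
      ring
    have hc3 : Continuous fun ζ : ℝ =>
        ((V₀ x + ∑ j, e (t + ζ) j * x j : ℝ) : ℂ) * (Complex.I * (ε : ℂ)⁻¹ * u x) := by
      exact (Complex.continuous_ofReal.comp hPcont).mul continuous_const
    simp only [hrw]
    rw [intervalIntegral.integral_sub intervalIntegrable_const
        (hc3.intervalIntegrable _ _),
      intervalIntegral.integral_const, intervalIntegral.integral_mul_const,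
      intervalIntegral.integral_ofReal, hPint]
    simp [Complex.real_smul, sub_zero]
  -- second term
  have hAcont : ∀ j : Fin n,
      Continuous fun ζ : ℝ => ∫ ξ in (0:ℝ)..ζ, (e (t + ζ) j - e (t + ξ) j) := by
    intro j
    have heq : (fun ζ : ℝ => ∫ ξ in (0:ℝ)..ζ, (e (t + ζ) j - e (t + ξ) j))
        = fun ζ : ℝ => ζ * e (t + ζ) j - ∫ ξ in (0:ℝ)..ζ, e (t + ξ) j :=
      funext (inner_eq (hej j))
    rw [heq]
    exact (continuous_id.mul (hej j)).sub (cont_primitive (hej j))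
  have hInner : ∀ ζ : ℝ,
      (∫ ξ in (0:ℝ)..ζ, 2 * ∑ j, ((e (t + ζ) j - e (t + ξ) j : ℝ) : ℂ)
          * fderiv ℝ u x (Pi.single j 1))
      = 2 * ∑ j, ((∫ ξ in (0:ℝ)..ζ, (e (t + ζ) j - e (t + ξ) j) : ℝ) : ℂ)
          * fderiv ℝ u x (Pi.single j 1) := by
    intro ζ
    have hc4 : ∀ j : Fin n, Continuous fun ξ : ℝ =>
        ((e (t + ζ) j - e (t + ξ) j : ℝ) : ℂ) * fderiv ℝ u x (Pi.single j 1) := fun j => by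
      exact (Complex.continuous_ofReal.comp (continuous_const.sub (hej j))).mul
        continuous_const
    rw [intervalIntegral.integral_const_mul,
      intervalIntegral.integral_finset_sum (fun j _ => (hc4 j).intervalIntegrable _ _)]
    congr 1
    refine Finset.sum_congr rfl fun j _ => ?_
    rw [intervalIntegral.integral_mul_const, intervalIntegral.integral_ofReal]
  have hterm2 : (∫ ζ in (0:ℝ)..h, ∫ ξ in (0:ℝ)..ζ,
        (opA ε V₀ e (t + ξ) (opA ε V₀ e (t + ζ) u) x
          - opA ε V₀ e (t + ζ) (opA ε V₀ e (t + ξ) u) x))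
      = 2 * ∑ j, ((∫ ζ in (0:ℝ)..h, (2 * ζ - h) * e (t + ζ) j : ℝ) : ℂ)
          * fderiv ℝ u x (Pi.single j 1) := by
    have hcomm : ∀ ζ ξ : ℝ,
        opA ε V₀ e (t + ξ) (opA ε V₀ e (t + ζ) u) x
          - opA ε V₀ e (t + ζ) (opA ε V₀ e (t + ξ) u) x
        = 2 * ∑ j, ((e (t + ζ) j - e (t + ξ) j : ℝ) : ℂ)
            * fderiv ℝ u x (Pi.single j 1) := fun ζ ξ =>
      opA_comm ε hε V₀ hV e hu (t + ξ) (t + ζ) x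
    simp only [hcomm]
    simp only [hInner]
    have hc5 : ∀ j : Fin n, Continuous fun ζ : ℝ =>
        ((∫ ξ in (0:ℝ)..ζ, (e (t + ζ) j - e (t + ξ) j) : ℝ) : ℂ)
          * fderiv ℝ u x (Pi.single j 1) := fun j => by
      exact (Complex.continuous_ofReal.comp (hAcont j)).mul continuous_const
    rw [intervalIntegral.integral_const_mul,
      intervalIntegral.integral_finset_sum (fun j _ => (hc5 j).intervalIntegrable _ _)]
    congr 1
    refine Finset.sum_congr rfl fun j _ => ?_
    rw [intervalIntegral.integral_mul_const, intervalIntegral.integral_ofReal,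
      double_integral_aux (hej j) h]
  -- the vectors r and s componentwise
  have hR : ∀ j : Fin n, magnusR e t h j
      = (1 / h) * ∫ ζ in (0:ℝ)..h, e (t + ζ) j := by
    intro j
    simp only [magnusR, Pi.smul_apply, smul_eq_mul]
    rw [intervalIntegral_pi_apply het 0 h j]
  have hSj : ∀ j : Fin n, magnusS e t h j
      = ∫ ζ in (0:ℝ)..h, (2 * ζ - h) * e (t + ζ) j := by
    intro j
    have hcont : Continuous fun ζ : ℝ => (ζ - h / 2) • e (t + ζ) :=
      (continuous_id.sub continuous_const).smul het
    have h1 : (∫ ζ in (0:ℝ)..h, (2 * ζ - h) * e (t + ζ) j)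
        = 2 * ∫ ζ in (0:ℝ)..h, (ζ - h / 2) * e (t + ζ) j := by
      rw [← intervalIntegral.integral_const_mul]
      apply intervalIntegral.integral_congr
      intro ζ _
      ring
    simp only [magnusS, Pi.smul_apply, smul_eq_mul]
    rw [intervalIntegral_pi_apply hcont 0 h j, h1]
    congr 1
  have hsum : ∑ j, magnusR e t h j * x j
      = (1 / h) * ∑ j, (∫ ζ in (0:ℝ)..h, e (t + ζ) j) * x j := by
    rw [Finset.mul_sum]
    refine Finset.sum_congr rfl fun j _ => ?_
    rw [hR j]
    ring
  rw [hterm1, hterm2]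
  simp only [hSj, hsum]
  push_cast
  field_simp
end

section
/- Let e : ℝ → ℝⁿ, t ∈ ℝ, h > 0, and suppose e is Lipschitz with constant L on [t, t+h], i.e. ‖e(t₁) − e(t₂)‖ ≤ L|t₁ − t₂| for all t₁, t₂ ∈ [t, t+h]. Then the vector s(t,h) = 2 ∫₀ʰ (ζ − h/2) e(t+ζ) dζ satisfies ‖s(t,h)‖ ≤ L h³ / 6. In particular s(t,h) = O(h³) as h → 0⁺. -/
/-- If `e` is Lipschitz with constant `L` on `[t, t+h]`, then the drift vector
`s(t,h) = 2 ∫₀ʰ (ζ − h/2) e(t+ζ) dζ` satisfies `‖s(t,h)‖ ≤ L h³ / 6`,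
so in particular `s(t,h) = O(h³)`. -/
theorem magnus_drift_bound {n : ℕ} (e : ℝ → EuclideanSpace ℝ (Fin n))
    (he : Continuous e) (t h L : ℝ) (hh : 0 < h)
    (hL : ∀ t₁ ∈ Set.Icc t (t + h), ∀ t₂ ∈ Set.Icc t (t + h),
      ‖e t₁ - e t₂‖ ≤ L * |t₁ - t₂|) :
    ‖(2 : ℝ) • ∫ ζ in (0:ℝ)..h, (ζ - h / 2) • e (t + ζ)‖ ≤ L * h ^ 3 / 6 := by
  set c := e (t + h / 2) with hc
  have hmem : t + h / 2 ∈ Set.Icc t (t + h) := ⟨by linarith, by linarith⟩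
  have hint1 : IntervalIntegrable (fun ζ : ℝ => (ζ - h / 2) • e (t + ζ))
      MeasureTheory.volume 0 h :=
    (Continuous.smul (f := fun ζ : ℝ => ζ - h / 2) (g := fun ζ : ℝ => e (t + ζ)) (by continuity) (he.comp (f := fun ζ : ℝ => t + ζ) (by continuity))).intervalIntegrable 0 h
  have hint2 : IntervalIntegrable (fun ζ : ℝ => (ζ - h / 2) • c) MeasureTheory.volume 0 h :=
    (Continuous.smul (f := fun ζ : ℝ => ζ - h / 2) (g := fun _ : ℝ => c) (by continuity) continuous_const).intervalIntegrable 0 h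
  have hzero : (∫ ζ in (0:ℝ)..h, (ζ - h / 2) • c) = 0 := by
    rw [intervalIntegral.integral_smul_const]
    have h0 : (∫ ζ in (0:ℝ)..h, (ζ - h / 2)) = 0 := by
      have hsub : (∫ ζ in (0:ℝ)..h, (ζ - h / 2))
          = (∫ ζ in (0:ℝ)..h, ζ) - ∫ _ in (0:ℝ)..h, (h / 2) :=
        intervalIntegral.integral_sub (continuous_id.intervalIntegrable 0 h)
          intervalIntegrable_const
      rw [hsub, integral_id, intervalIntegral.integral_const, smul_eq_mul]
      ring
    rw [h0, zero_smul]
  have hkey : (∫ ζ in (0:ℝ)..h, (ζ - h / 2) • e (t + ζ))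
      = ∫ ζ in (0:ℝ)..h, (ζ - h / 2) • (e (t + ζ) - c) := by
    rw [show (fun ζ : ℝ => (ζ - h / 2) • (e (t + ζ) - c))
        = fun ζ : ℝ => (ζ - h / 2) • e (t + ζ) - (ζ - h / 2) • c by
      funext ζ; rw [smul_sub]]
    rw [intervalIntegral.integral_sub hint1 hint2, hzero, sub_zero]
  have hLnonneg : 0 ≤ L := by
    have hb := hL t ⟨le_refl t, by linarith⟩ (t + h) ⟨by linarith, le_refl _⟩
    have h1 : |t - (t + h)| = h := by rw [abs_sub_comm]; simp [abs_of_pos hh]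
    rw [h1] at hb
    nlinarith [norm_nonneg (e t - e (t + h))]
  have hgint : IntervalIntegrable (fun ζ : ℝ => L * (ζ - h / 2) ^ 2)
      MeasureTheory.volume 0 h := by
    apply Continuous.intervalIntegrable; continuity
  have hbound : ‖∫ ζ in (0:ℝ)..h, (ζ - h / 2) • (e (t + ζ) - c)‖
      ≤ |∫ ζ in (0:ℝ)..h, L * (ζ - h / 2) ^ 2| := by
    apply intervalIntegral.norm_integral_le_abs_of_norm_le _ hgint
    filter_upwards [MeasureTheory.ae_restrict_mem measurableSet_uIoc] with ζ hζ
    rw [Set.uIoc_of_le hh.le] at hζ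
    have hζmem : t + ζ ∈ Set.Icc t (t + h) := ⟨by linarith [hζ.1], by linarith [hζ.2]⟩
    have hlip := hL (t + ζ) hζmem (t + h / 2) hmem
    have habs : |t + ζ - (t + h / 2)| = |ζ - h / 2| := by ring_nf
    rw [habs] at hlip
    rw [norm_smul, Real.norm_eq_abs]
    calc |ζ - h / 2| * ‖e (t + ζ) - c‖ ≤ |ζ - h / 2| * (L * |ζ - h / 2|) := by
          exact mul_le_mul_of_nonneg_left hlip (abs_nonneg _)
      _ = L * (ζ - h / 2) ^ 2 := by rw [mul_comm, mul_assoc, abs_mul_abs_self, sq]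
  have hval : (∫ ζ in (0:ℝ)..h, L * (ζ - h / 2) ^ 2) = L * (h ^ 3 / 12) := by
    rw [intervalIntegral.integral_const_mul,
      intervalIntegral.integral_comp_sub_right (fun x => x ^ 2) (h / 2), integral_pow]
    ring
  rw [hkey, norm_smul]
  have habs2 : |∫ ζ in (0:ℝ)..h, L * (ζ - h / 2) ^ 2| = L * (h ^ 3 / 12) := by
    rw [hval, abs_of_nonneg (by positivity)]
  rw [habs2] at hbound
  simp only [Real.norm_ofNat]
  nlinarith [norm_nonneg (∫ ζ in (0:ℝ)..h, (ζ - h / 2) • (e (t + ζ) - c))]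
end

section
/- Let ε ≠ 0, h > 0, s ∈ ℝⁿ, let Ṽ : ℝⁿ → ℝ be twice continuously differentiable, and define the operators X u = i h ε Δu − sᵀ∇u and Y u = −i h ε⁻¹ Ṽ·u on twice continuously differentiable u : ℝⁿ → ℂ. Then the first-order drift term makes no contribution to the nested commutator, which again reduces to a multiplication operator: for all such u and all x ∈ ℝⁿ, ([[X,Y],Y]u)(x) = −2 i h³ ε⁻¹ ‖(∇Ṽ)(x)‖² u(x). -/
open scoped BigOperators

/-- The drifted kinetic operator `X u = i h ε Δu − sᵀ∇u`. -/
noncomputable def opXdrift {n : ℕ} (ε h : ℝ) (s : Fin n → ℝ)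
    (u : (Fin n → ℝ) → ℂ) : (Fin n → ℝ) → ℂ :=
  fun x => Complex.I * (h : ℂ) * (ε : ℂ) * laplacian u x
    - ∑ j : Fin n, (s j : ℂ) * fderiv ℝ u x (Pi.single j 1)

/-- The potential operator `Y u = −i h ε⁻¹ Ṽ·u`. -/
noncomputable def opY {n : ℕ} (ε h : ℝ) (V : (Fin n → ℝ) → ℝ)
    (u : (Fin n → ℝ) → ℂ) : (Fin n → ℝ) → ℂ :=
  fun x => -(Complex.I * (h : ℂ) * (ε : ℂ)⁻¹) * (V x : ℂ) * u x


section Helpers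
variable {n : ℕ}


lemma diff_fderiv_apply {f : (Fin n → ℝ) → ℂ} (hf : ContDiff ℝ 2 f) (v : Fin n → ℝ) :
    Differentiable ℝ (fun y => fderiv ℝ f y v) := by
  have h1 : ContDiff ℝ 1 (fun y => fderiv ℝ f y) := hf.fderiv_right (by norm_num)
  exact (h1.clm_apply contDiff_const).differentiable one_ne_zero

lemma fderiv_mul_apply' {f g : (Fin n → ℝ) → ℂ} {x : Fin n → ℝ}
    (hf : DifferentiableAt ℝ f x) (hg : DifferentiableAt ℝ g x) (v : Fin n → ℝ) :
    fderiv ℝ (fun y => f y * g y) x v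
      = fderiv ℝ f x v * g x + f x * fderiv ℝ g x v := by
  rw [fderiv_fun_mul hf hg]; simp; ring

lemma second_deriv_mul {f g : (Fin n → ℝ) → ℂ} (hf : ContDiff ℝ 2 f) (hg : ContDiff ℝ 2 g)
    (x : Fin n → ℝ) (v : Fin n → ℝ) :
    fderiv ℝ (fun y => fderiv ℝ (fun z => f z * g z) y v) x v
      = fderiv ℝ (fun y => fderiv ℝ f y v) x v * g x
        + 2 * (fderiv ℝ f x v * fderiv ℝ g x v)
        + f x * fderiv ℝ (fun y => fderiv ℝ g y v) x v := by
  have hfd : Differentiable ℝ f := hf.differentiable two_ne_zero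
  have hgd : Differentiable ℝ g := hg.differentiable two_ne_zero
  have hf' := diff_fderiv_apply hf v
  have hg' := diff_fderiv_apply hg v
  have hrw : (fun y => fderiv ℝ (fun z => f z * g z) y v)
      = fun y => fderiv ℝ f y v * g y + f y * fderiv ℝ g y v := by
    funext y; exact fderiv_mul_apply' (hfd y) (hgd y) v
  rw [hrw, fderiv_fun_add ((hf' x).fun_mul (hgd x)) ((hfd x).fun_mul (hg' x))]
  simp only [ContinuousLinearMap.add_apply]
  rw [fderiv_mul_apply' ((hf' x)) (hgd x) v, fderiv_mul_apply' (hfd x) (hg' x) v]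
  ring

lemma key_comm {W u : (Fin n → ℝ) → ℂ} (hW : ContDiff ℝ 2 W) (hu : ContDiff ℝ 2 u)
    (ε h : ℝ) (s : Fin n → ℝ) (x : Fin n → ℝ) :
    opXdrift ε h s (fun y => W y * (W y * u y)) x
      - 2 * W x * opXdrift ε h s (fun y => W y * u y) x
      + W x * (W x * opXdrift ε h s u x)
    = Complex.I * h * ε * (2 * ∑ j : Fin n, (fderiv ℝ W x (Pi.single j 1))^2) * u x := by
  have hWd : Differentiable ℝ W := hW.differentiable two_ne_zero
  have hud : Differentiable ℝ u := hu.differentiable two_ne_zero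
  have hWu : ContDiff ℝ 2 (fun y => W y * u y) := hW.mul hu
  have hWud : Differentiable ℝ (fun y => W y * u y) := hWu.differentiable two_ne_zero
  -- first order rules
  have e1 : ∀ j : Fin n, fderiv ℝ (fun y => W y * u y) x (Pi.single j 1)
      = fderiv ℝ W x (Pi.single j 1) * u x + W x * fderiv ℝ u x (Pi.single j 1) :=
    fun j => fderiv_mul_apply' (hWd x) (hud x) _
  have e2 : ∀ j : Fin n, fderiv ℝ (fun y => W y * (W y * u y)) x (Pi.single j 1)
      = fderiv ℝ W x (Pi.single j 1) * (W x * u x)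
        + W x * fderiv ℝ (fun y => W y * u y) x (Pi.single j 1) :=
    fun j => fderiv_mul_apply' (hWd x) (hWud x) _
  -- second order rules
  have e3 : ∀ j : Fin n,
      fderiv ℝ (fun y => fderiv ℝ (fun z => W z * u z) y (Pi.single j 1)) x (Pi.single j 1)
      = fderiv ℝ (fun y => fderiv ℝ W y (Pi.single j 1)) x (Pi.single j 1) * u x
        + 2 * (fderiv ℝ W x (Pi.single j 1) * fderiv ℝ u x (Pi.single j 1))
        + W x * fderiv ℝ (fun y => fderiv ℝ u y (Pi.single j 1)) x (Pi.single j 1) :=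
    fun j => second_deriv_mul hW hu x _
  have e4 : ∀ j : Fin n,
      fderiv ℝ (fun y => fderiv ℝ (fun z => W z * (W z * u z)) y (Pi.single j 1)) x (Pi.single j 1)
      = fderiv ℝ (fun y => fderiv ℝ W y (Pi.single j 1)) x (Pi.single j 1) * (W x * u x)
        + 2 * (fderiv ℝ W x (Pi.single j 1) * fderiv ℝ (fun y => W y * u y) x (Pi.single j 1))
        + W x * fderiv ℝ (fun y => fderiv ℝ (fun z => W z * u z) y (Pi.single j 1)) x (Pi.single j 1) :=
    fun j => second_deriv_mul hW hWu x _
  simp only [opXdrift, laplacian]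
  simp only [sub_eq_add_neg, mul_add, mul_neg, neg_mul, neg_add]
  simp only [Finset.mul_sum, Finset.sum_mul, ← Finset.sum_neg_distrib,
    ← Finset.sum_add_distrib]
  refine Finset.sum_congr rfl fun j _ => ?_
  rw [e4 j, e2 j, e3 j, e1 j]
  ring

end Helpers

/-- The first-order drift `−sᵀ∇` makes no contribution to the nested commutator:
`[[X,Y],Y] = X∘Y∘Y − 2 Y∘X∘Y + Y∘Y∘X` is again multiplication by
`−2ih³ε⁻¹‖∇Ṽ‖²`. -/
theorem nested_commutator_with_drift {n : ℕ} (ε h : ℝ) (hε : ε ≠ 0) (hh : 0 < h)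
    (s : Fin n → ℝ) (V : (Fin n → ℝ) → ℝ) (hV : ContDiff ℝ 2 V)
    (u : (Fin n → ℝ) → ℂ) (hu : ContDiff ℝ 2 u) (x : Fin n → ℝ) :
    opXdrift ε h s (opY ε h V (opY ε h V u)) x
        - 2 * opY ε h V (opXdrift ε h s (opY ε h V u)) x
        + opY ε h V (opY ε h V (opXdrift ε h s u)) x
      = -2 * Complex.I * (h : ℂ) ^ 3 * (ε : ℂ)⁻¹
          * ((∑ j : Fin n, (fderiv ℝ V x (Pi.single j 1)) ^ 2 : ℝ) : ℂ) * u x := by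
  set c : ℂ := -(Complex.I * (h : ℂ) * (ε : ℂ)⁻¹) with hc
  set W : (Fin n → ℝ) → ℂ := fun y => c * (V y : ℂ) with hWdef
  have hW : ContDiff ℝ 2 W := contDiff_const.mul (Complex.ofRealCLM.contDiff.comp hV)
  have hVx : DifferentiableAt ℝ V x := (hV.differentiable two_ne_zero) x
  have hDW : ∀ v : Fin n → ℝ, fderiv ℝ W x v = c * (fderiv ℝ V x v : ℂ) := by
    intro v
    have h1 : fderiv ℝ (fun y => ((V y : ℝ) : ℂ)) x
        = Complex.ofRealCLM.comp (fderiv ℝ V x) :=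
      (Complex.ofRealCLM.hasFDerivAt.comp x hVx.hasFDerivAt).fderiv
    have h2 : DifferentiableAt ℝ (fun y => ((V y : ℝ) : ℂ)) x :=
      Complex.ofRealCLM.differentiableAt.comp x hVx
    rw [hWdef, fderiv_const_mul h2 c]
    simp [h1]
  have hkey := key_comm hW hu ε h s x
  have hsum : (∑ j : Fin n, (fderiv ℝ W x (Pi.single j 1))^2)
      = c^2 * ((∑ j : Fin n, (fderiv ℝ V x (Pi.single j 1))^2 : ℝ) : ℂ) := by
    push_cast
    rw [Finset.mul_sum]
    exact Finset.sum_congr rfl fun j _ => by rw [hDW]; ring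
  rw [hsum] at hkey
  have hε' : (ε : ℂ) ≠ 0 := by exact_mod_cast hε
  have hscal : Complex.I * (h:ℂ) * (ε:ℂ) *
        (2 * (c ^ 2 * ((∑ j : Fin n, (fderiv ℝ V x (Pi.single j 1))^2 : ℝ) : ℂ))) * u x
      = -2 * Complex.I * (h : ℂ) ^ 3 * (ε : ℂ)⁻¹
          * ((∑ j : Fin n, (fderiv ℝ V x (Pi.single j 1)) ^ 2 : ℝ) : ℂ) * u x := by
    rw [hc]
    field_simp
    ring_nf
    have h3 : Complex.I ^ 3 = -Complex.I := by
      rw [(by norm_num : 3 = 2 + 1), pow_succ, Complex.I_sq]; ring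
    rw [Complex.I_sq]; ring
  rw [hscal] at hkey
  show opXdrift ε h s (fun y => W y * (W y * u y)) x
      - 2 * (W x * opXdrift ε h s (fun y => W y * u y) x)
      + W x * (W x * opXdrift ε h s u x) = _
  linear_combination hkey
end

section
/- Let n ≥ 1 and let X, Y : (0,∞) → Matrix (Fin n) (Fin n) ℂ be matrix-valued functions such that ‖X(h)‖ = O(h) and ‖Y(h)‖ = O(h³) as h → 0⁺. Then the Strang splitting approximates the exponential of the sum to fifth order: ‖ exp(Y(h)/2) · exp(X(h)) · exp(Y(h)/2) − exp(X(h) + Y(h)) ‖ = O(h⁵) as h → 0⁺. -/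
open scoped Matrix Topology
open Asymptotics NormedSpace
set_option maxHeartbeats 1000000

attribute [local instance] Matrix.linftyOpNormedRing Matrix.linftyOpNormedAlgebra

lemma exp_le_three {t : ℝ} (h : t ≤ 1) : Real.exp t ≤ 3 :=
  (Real.exp_le_exp.mpr h).trans (by nlinarith [Real.exp_one_lt_d9])

lemma exp_le_nine {t : ℝ} (h : t ≤ 2) : Real.exp t ≤ 9 := by
  have h2 : Real.exp 2 = Real.exp 1 * Real.exp 1 := by rw [← Real.exp_add]; norm_num
  nlinarith [Real.exp_le_exp.mpr h, Real.exp_one_lt_d9, Real.exp_pos 1]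

lemma poly3 (a b : ℝ) (ha0 : 0 ≤ a) (hb0 : 0 ≤ b) :
    b * (a + b) ^ 2 + a * b * (a + b) + a * a * b ≤ 3 * ((a + b) ^ 2 * b) := by nlinarith [mul_nonneg ha0 hb0, mul_nonneg (mul_nonneg ha0 ha0) hb0, mul_nonneg (mul_nonneg ha0 hb0) hb0, mul_nonneg (mul_nonneg hb0 hb0) hb0]

lemma poly4 (a b : ℝ) (ha0 : 0 ≤ a) (hb0 : 0 ≤ b) :
    b * (a + b) ^ 3 + a * b * (a + b) ^ 2 + a * a * b * (a + b) + a * a * a * b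
      ≤ 4 * ((a + b) ^ 3 * b) := by nlinarith [mul_nonneg (mul_nonneg (mul_nonneg ha0 ha0) ha0) hb0, mul_nonneg (mul_nonneg (mul_nonneg ha0 ha0) hb0) hb0, mul_nonneg (mul_nonneg (mul_nonneg ha0 hb0) hb0) hb0, mul_nonneg (mul_nonneg (mul_nonneg hb0 hb0) hb0) hb0]

lemma poly_final (a b : ℝ) (ha0 : 0 ≤ a) (ha1 : a ≤ 1) (hb0 : 0 ≤ b) (hb1 : b ≤ 1) :
    a ^ 5 * 3 + (a + b) ^ 5 * 9 + (1 / 2) * b ^ 2 + (1 / 2) * ((a + b) ^ 2 * b)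
        + (1 / 6) * ((a + b) ^ 3 * b) + (b / 2) * (a ^ 2 * 3) + (a ^ 2 * 3) * (b / 2)
        + (b / 2) * 3 * (b / 2) + (3 + (b / 2) * 3) * ((b / 2) ^ 2 * 3)
        + (b / 2) ^ 2 * 3 * 3 * 3
      ≤ 200 * (a ^ 5 + a ^ 2 * b + b ^ 2) := by
  have p1 : a ^ 4 ≤ a ^ 2 := pow_le_pow_of_le_one ha0 ha1 (by norm_num)
  have p2 : a ^ 3 ≤ 1 := pow_le_one₀ ha0 ha1
  have p3 : a ^ 2 ≤ 1 := pow_le_one₀ ha0 ha1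
  have p4 : a ≤ 1 := ha1
  have p5 : b ^ 5 ≤ b ^ 2 := pow_le_pow_of_le_one hb0 hb1 (by norm_num)
  have p6 : a ^ 3 ≤ a ^ 2 := pow_le_pow_of_le_one ha0 ha1 (by norm_num)
  have p7 : b ^ 3 ≤ b ^ 2 := pow_le_pow_of_le_one hb0 hb1 (by norm_num)
  have p8 : b ^ 4 ≤ b ^ 2 := pow_le_pow_of_le_one hb0 hb1 (by norm_num)
  have hb2 : (0:ℝ) ≤ b ^ 2 := pow_nonneg hb0 2
  have hb3 : (0:ℝ) ≤ b ^ 3 := pow_nonneg hb0 3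
  have m1 : a ^ 4 * b ≤ a ^ 2 * b := mul_le_mul_of_nonneg_right p1 hb0
  have m2 : a ^ 3 * b ^ 2 ≤ b ^ 2 := by
    have := mul_le_mul_of_nonneg_right p2 hb2; linarith
  have m3 : a ^ 2 * b ^ 3 ≤ b ^ 2 := by
    have h1 := mul_le_mul_of_nonneg_right p3 hb3; linarith
  have m4 : a * b ^ 4 ≤ b ^ 2 := by
    have h1 := mul_le_mul_of_nonneg_right p4 (pow_nonneg hb0 4); linarith
  have m5 : b ^ 5 ≤ b ^ 2 := p5
  have m6 : a ^ 3 * b ≤ a ^ 2 * b := mul_le_mul_of_nonneg_right p6 hb0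
  have m7 : a * b ^ 2 ≤ b ^ 2 := by
    have := mul_le_mul_of_nonneg_right p4 hb2; linarith
  have m8 : b ^ 3 ≤ b ^ 2 := p7
  have m9 : a ^ 2 * b ^ 2 ≤ b ^ 2 := by
    have := mul_le_mul_of_nonneg_right p3 hb2; linarith
  have m10 : a * b ^ 3 ≤ b ^ 2 := by
    have := mul_le_mul_of_nonneg_right p4 hb3; linarith
  have m11 : b ^ 4 ≤ b ^ 2 := p8
  ring_nf
  nlinarith [m1, m2, m3, m4, m5, m6, m7, m8, m9, m10, m11,
    mul_nonneg ha0 hb0, mul_nonneg (pow_nonneg ha0 2) hb0, pow_nonneg ha0 5, hb2, hb3,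
    mul_nonneg (pow_nonneg ha0 4) hb0, mul_nonneg (pow_nonneg ha0 3) hb0]

lemma exp_tail {n : ℕ} (hn : 1 ≤ n) (x : Matrix (Fin n) (Fin n) ℂ) (N : ℕ) :
    ‖exp x - ∑ k ∈ Finset.range N, (k.factorial : ℂ)⁻¹ • x ^ k‖
      ≤ ‖x‖ ^ N * Real.exp ‖x‖ := by
  haveI : Nonempty (Fin n) := ⟨⟨0, hn⟩⟩
  have hsum : Summable fun k : ℕ => ((k.factorial : ℂ))⁻¹ • x ^ k := by
    exact NormedSpace.expSeries_summable' (𝕂 := ℂ) x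
  have h1 : exp x - ∑ k ∈ Finset.range N, (k.factorial : ℂ)⁻¹ • x ^ k
      = ∑' k : ℕ, ((k + N).factorial : ℂ)⁻¹ • x ^ (k + N) := by
    rw [show exp x = ∑' k : ℕ, (k.factorial : ℂ)⁻¹ • x ^ k from
        congrFun (NormedSpace.exp_eq_tsum ℂ) x, ← Summable.sum_add_tsum_nat_add N hsum]
    abel
  rw [h1]
  have hnorm : Summable fun k : ℕ => ‖((k + N).factorial : ℂ)⁻¹ • x ^ (k + N)‖ := by
    have := (NormedSpace.norm_expSeries_summable' (𝕂 := ℂ) x)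
    exact (this.comp_injective (add_left_injective N)).congr (fun k => rfl)
  have hb : ∀ k : ℕ, ‖((k + N).factorial : ℂ)⁻¹ • x ^ (k + N)‖
      ≤ ‖x‖ ^ N * (‖x‖ ^ k / k.factorial) := by
    intro k
    rw [norm_smul, norm_inv, Complex.norm_natCast]
    have h2 : ‖x ^ (k + N)‖ ≤ ‖x‖ ^ (k + N) := norm_pow_le x (k + N)
    have h3 : ((k + N).factorial : ℝ)⁻¹ ≤ (k.factorial : ℝ)⁻¹ := by
      apply inv_anti₀ (by positivity)
      exact_mod_cast Nat.factorial_le (Nat.le_add_right k N)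
    calc ((k + N).factorial : ℝ)⁻¹ * ‖x ^ (k + N)‖
        ≤ (k.factorial : ℝ)⁻¹ * ‖x‖ ^ (k + N) := by
          apply mul_le_mul h3 h2 (norm_nonneg _) (by positivity)
      _ = ‖x‖ ^ N * (‖x‖ ^ k / k.factorial) := by rw [pow_add]; ring
  calc ‖∑' k : ℕ, ((k + N).factorial : ℂ)⁻¹ • x ^ (k + N)‖
      ≤ ∑' k : ℕ, ‖((k + N).factorial : ℂ)⁻¹ • x ^ (k + N)‖ := norm_tsum_le_tsum_norm hnorm
    _ ≤ ∑' k : ℕ, ‖x‖ ^ N * (‖x‖ ^ k / k.factorial) := by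
        apply Summable.tsum_le_tsum hb hnorm
        exact (Real.summable_pow_div_factorial ‖x‖).mul_left _
    _ = ‖x‖ ^ N * Real.exp ‖x‖ := by
        rw [tsum_mul_left, Real.exp_eq_exp_ℝ, NormedSpace.exp_eq_tsum_div]

lemma key_bound {n : ℕ} (hn : 1 ≤ n) (A B : Matrix (Fin n) (Fin n) ℂ)
    (ha1 : ‖A‖ ≤ 1) (hb1 : ‖B‖ ≤ 1) :
    ‖exp ((1 / 2 : ℂ) • B) * exp A * exp ((1 / 2 : ℂ) • B) - exp (A + B)‖
      ≤ 200 * (‖A‖ ^ 5 + ‖A‖ ^ 2 * ‖B‖ + ‖B‖ ^ 2) := by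
  haveI : Nonempty (Fin n) := ⟨⟨0, hn⟩⟩
  obtain ⟨a, ha_def⟩ : ∃ a, ‖A‖ = a := ⟨‖A‖, rfl⟩
  obtain ⟨b, hb_def⟩ : ∃ b, ‖B‖ = b := ⟨‖B‖, rfl⟩
  rw [ha_def] at ha1 ⊢
  rw [hb_def] at hb1 ⊢
  have ha0 : 0 ≤ a := ha_def ▸ norm_nonneg A
  have hb0 : 0 ≤ b := hb_def ▸ norm_nonneg B
  have hab0 : (0:ℝ) ≤ a + b := add_nonneg ha0 hb0
  set B' : Matrix (Fin n) (Fin n) ℂ := (1 / 2 : ℂ) • B with hB'_def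
  set P := exp B' with hP_def
  set Q := exp A with hQ_def
  set S := exp (A + B) with hS_def
  have hB'n : ‖B'‖ = b / 2 := by
    rw [hB'_def, norm_smul, hb_def]
    norm_num
    ring
  have hs : ‖A + B‖ ≤ a + b := by
    rw [← ha_def, ← hb_def]; exact norm_add_le A B
  have hs2 : ‖A + B‖ ≤ 2 := hs.trans (by linarith)
  -- norms of exponentials
  have hQn : ‖Q‖ ≤ 3 := by
    have := exp_tail hn A 0
    simp only [Finset.range_zero, Finset.sum_empty, sub_zero, pow_zero, one_mul] at this
    rw [ha_def] at this
    exact this.trans (exp_le_three ha1)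
  have hPn : ‖P‖ ≤ 3 := by
    have := exp_tail hn B' 0
    simp only [Finset.range_zero, Finset.sum_empty, sub_zero, pow_zero, one_mul] at this
    rw [hB'n] at this
    exact this.trans (exp_le_three (by linarith))
  -- second-order tails
  have hsum2 : ∀ x : Matrix (Fin n) (Fin n) ℂ,
      ∑ k ∈ Finset.range 2, (k.factorial : ℂ)⁻¹ • x ^ k = 1 + x := by
    intro x
    simp [Finset.sum_range_succ]
  have hr1 : ‖P - 1 - B'‖ ≤ (b / 2) ^ 2 * 3 := by
    have h := exp_tail hn B' 2
    rw [hsum2 B', hB'n] at h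
    have heq : P - 1 - B' = P - (1 + B') := by abel
    rw [heq]
    refine h.trans (mul_le_mul_of_nonneg_left (exp_le_three (by linarith)) ?_)
    exact pow_nonneg (by linarith) 2
  have hrQ : ‖Q - 1 - A‖ ≤ a ^ 2 * 3 := by
    have h := exp_tail hn A 2
    rw [hsum2 A, ha_def] at h
    have heq : Q - 1 - A = Q - (1 + A) := by abel
    rw [heq]
    exact h.trans (mul_le_mul_of_nonneg_left (exp_le_three ha1) (pow_nonneg ha0 2))
  -- fifth-order tails
  have htQ : ‖Q - ∑ k ∈ Finset.range 5, (k.factorial : ℂ)⁻¹ • A ^ k‖ ≤ a ^ 5 * 3 := by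
    have h := exp_tail hn A 5
    rw [ha_def] at h
    exact h.trans (mul_le_mul_of_nonneg_left (exp_le_three ha1) (pow_nonneg ha0 5))
  have htS : ‖S - ∑ k ∈ Finset.range 5, (k.factorial : ℂ)⁻¹ • (A + B) ^ k‖
      ≤ (a + b) ^ 5 * 9 := by
    refine (exp_tail hn (A + B) 5).trans ?_
    exact mul_le_mul (pow_le_pow_left₀ (norm_nonneg _) hs 5) (exp_le_nine hs2)
      (Real.exp_pos _).le (pow_nonneg hab0 5)
  -- telescoping bounds for cubes and fourth powers
  have htel3 : (A + B) ^ 3 - A ^ 3 = B * (A + B) ^ 2 + A * B * (A + B) + A * A * B := by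
    noncomm_ring
  have htel4 : (A + B) ^ 4 - A ^ 4
      = B * (A + B) ^ 3 + A * B * (A + B) ^ 2 + A * A * B * (A + B) + A * A * A * B := by
    noncomm_ring
  have hpow : ∀ k : ℕ, ‖(A + B) ^ k‖ ≤ (a + b) ^ k := fun k =>
    (norm_pow_le (A + B) k).trans (pow_le_pow_left₀ (norm_nonneg _) hs k)
  have hAA : ‖A * A‖ ≤ a * a := by
    refine (norm_mul_le _ _).trans ?_; rw [ha_def]
  have hAB : ‖A * B‖ ≤ a * b := by
    refine (norm_mul_le _ _).trans ?_; rw [ha_def, hb_def]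
  have hAAB : ‖A * A * B‖ ≤ a * a * b := by
    refine (norm_mul_le _ _).trans ?_
    rw [hb_def]
    exact mul_le_mul_of_nonneg_right hAA (hb_def ▸ norm_nonneg B)
  have hAAA : ‖A * A * A‖ ≤ a * a * a := by
    refine (norm_mul_le _ _).trans ?_
    rw [ha_def]
    exact mul_le_mul_of_nonneg_right hAA (ha_def ▸ norm_nonneg A)
  have h3 : ‖(A + B) ^ 3 - A ^ 3‖ ≤ 3 * ((a + b) ^ 2 * b) := by
    rw [htel3]
    have t1 : ‖B * (A + B) ^ 2‖ ≤ b * (a + b) ^ 2 := by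
      exact (norm_mul_le _ _).trans
        (mul_le_mul hb_def.le (hpow 2) (norm_nonneg _) hb0)
    have t2 : ‖A * B * (A + B)‖ ≤ a * b * (a + b) :=
      (norm_mul_le _ _).trans (mul_le_mul hAB hs (norm_nonneg _) (mul_nonneg ha0 hb0))
    have t3 : ‖A * A * B‖ ≤ a * a * b := hAAB
    calc ‖B * (A + B) ^ 2 + A * B * (A + B) + A * A * B‖
        ≤ ‖B * (A + B) ^ 2‖ + ‖A * B * (A + B)‖ + ‖A * A * B‖ :=
          (norm_add_le _ _).trans (add_le_add (norm_add_le _ _) le_rfl)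
      _ ≤ b * (a + b) ^ 2 + a * b * (a + b) + a * a * b :=
          add_le_add (add_le_add t1 t2) t3
      _ ≤ 3 * ((a + b) ^ 2 * b) := poly3 a b ha0 hb0
  have h4 : ‖(A + B) ^ 4 - A ^ 4‖ ≤ 4 * ((a + b) ^ 3 * b) := by
    rw [htel4]
    have t1 : ‖B * (A + B) ^ 3‖ ≤ b * (a + b) ^ 3 := by
      exact (norm_mul_le _ _).trans
        (mul_le_mul hb_def.le (hpow 3) (norm_nonneg _) hb0)
    have t2 : ‖A * B * (A + B) ^ 2‖ ≤ a * b * (a + b) ^ 2 :=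
      (norm_mul_le _ _).trans (mul_le_mul hAB (hpow 2) (norm_nonneg _) (mul_nonneg ha0 hb0))
    have t3 : ‖A * A * B * (A + B)‖ ≤ a * a * b * (a + b) :=
      (norm_mul_le _ _).trans
        (mul_le_mul hAAB hs (norm_nonneg _) (mul_nonneg (mul_nonneg ha0 ha0) hb0))
    have t4 : ‖A * A * A * B‖ ≤ a * a * a * b := by
      refine (norm_mul_le _ _).trans ?_
      rw [hb_def]
      exact mul_le_mul_of_nonneg_right hAAA (hb_def ▸ norm_nonneg B)
    calc ‖B * (A + B) ^ 3 + A * B * (A + B) ^ 2 + A * A * B * (A + B) + A * A * A * B‖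
        ≤ ‖B * (A + B) ^ 3‖ + ‖A * B * (A + B) ^ 2‖ + ‖A * A * B * (A + B)‖
            + ‖A * A * A * B‖ :=
          (norm_add_le _ _).trans (add_le_add ((norm_add_le _ _).trans
            (add_le_add (norm_add_le _ _) le_rfl)) le_rfl)
      _ ≤ b * (a + b) ^ 3 + a * b * (a + b) ^ 2 + a * a * b * (a + b) + a * a * a * b :=
          add_le_add (add_le_add (add_le_add t1 t2) t3) t4
      _ ≤ 4 * ((a + b) ^ 3 * b) := poly4 a b ha0 hb0
  -- the main algebraic identity
  have hid : P * Q * P - S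
      = (Q - ∑ k ∈ Finset.range 5, (k.factorial : ℂ)⁻¹ • A ^ k)
        - (S - ∑ k ∈ Finset.range 5, (k.factorial : ℂ)⁻¹ • (A + B) ^ k)
        - (2 : ℂ)⁻¹ • (B * B)
        - (6 : ℂ)⁻¹ • ((A + B) ^ 3 - A ^ 3)
        - (24 : ℂ)⁻¹ • ((A + B) ^ 4 - A ^ 4)
        + B' * (Q - 1 - A) + (Q - 1 - A) * B'
        + B' * Q * B'
        + (Q + B' * Q) * (P - 1 - B')
        + (P - 1 - B') * Q * P := by
    rw [hB'_def]
    simp only [Finset.sum_range_succ, Finset.sum_range_zero, Nat.factorial,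
      Nat.cast_ofNat, Nat.cast_one, pow_succ, pow_zero]
    norm_num
    simp only [mul_add, add_mul, sub_mul, mul_sub, smul_mul_assoc, mul_smul_comm,
      mul_assoc, mul_one, one_mul, smul_sub, smul_add]
    module
  rw [hid]
  -- assemble the bound
  have hbb : ‖B * B‖ ≤ b ^ 2 := by
    refine (norm_mul_le _ _).trans ?_; rw [hb_def, sq]
  have nb3 : ‖(2 : ℂ)⁻¹ • (B * B)‖ ≤ (1 / 2) * b ^ 2 := by
    rw [norm_smul]
    calc ‖(2 : ℂ)⁻¹‖ * ‖B * B‖ = (1 / 2) * ‖B * B‖ := by norm_num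
      _ ≤ (1 / 2) * b ^ 2 := by linarith
  have nb4 : ‖(6 : ℂ)⁻¹ • ((A + B) ^ 3 - A ^ 3)‖ ≤ (1 / 2) * ((a + b) ^ 2 * b) := by
    rw [norm_smul]
    calc ‖(6 : ℂ)⁻¹‖ * ‖(A + B) ^ 3 - A ^ 3‖
        = (1 / 6) * ‖(A + B) ^ 3 - A ^ 3‖ := by norm_num
      _ ≤ (1 / 6) * (3 * ((a + b) ^ 2 * b)) := by linarith
      _ = (1 / 2) * ((a + b) ^ 2 * b) := by ring
  have nb5 : ‖(24 : ℂ)⁻¹ • ((A + B) ^ 4 - A ^ 4)‖ ≤ (1 / 6) * ((a + b) ^ 3 * b) := by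
    rw [norm_smul]
    calc ‖(24 : ℂ)⁻¹‖ * ‖(A + B) ^ 4 - A ^ 4‖
        = (1 / 24) * ‖(A + B) ^ 4 - A ^ 4‖ := by norm_num
      _ ≤ (1 / 24) * (4 * ((a + b) ^ 3 * b)) := by linarith
      _ = (1 / 6) * ((a + b) ^ 3 * b) := by ring
  have nb6 : ‖B' * (Q - 1 - A)‖ ≤ (b / 2) * (a ^ 2 * 3) := by
    refine (norm_mul_le _ _).trans ?_
    rw [hB'n]
    exact mul_le_mul_of_nonneg_left hrQ (by linarith)
  have nb7 : ‖(Q - 1 - A) * B'‖ ≤ (a ^ 2 * 3) * (b / 2) := by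
    refine (norm_mul_le _ _).trans ?_
    rw [hB'n]
    exact mul_le_mul_of_nonneg_right hrQ (by linarith)
  have nb8 : ‖B' * Q * B'‖ ≤ (b / 2) * 3 * (b / 2) := by
    refine (norm_mul_le _ _).trans ?_
    rw [hB'n]
    refine mul_le_mul_of_nonneg_right ?_ (by linarith)
    refine (norm_mul_le _ _).trans ?_
    rw [hB'n]
    exact mul_le_mul_of_nonneg_left hQn (by linarith)
  have nb9 : ‖(Q + B' * Q) * (P - 1 - B')‖ ≤ (3 + (b / 2) * 3) * ((b / 2) ^ 2 * 3) := by
    refine (norm_mul_le _ _).trans (mul_le_mul ?_ hr1 (norm_nonneg _) (by linarith)) 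
    refine (norm_add_le _ _).trans (add_le_add hQn ?_)
    refine (norm_mul_le _ _).trans ?_
    rw [hB'n]
    exact mul_le_mul_of_nonneg_left hQn (by linarith)
  have nb10 : ‖(P - 1 - B') * Q * P‖ ≤ (b / 2) ^ 2 * 3 * 3 * 3 := by
    refine (norm_mul_le _ _).trans ?_
    refine mul_le_mul ((norm_mul_le _ _).trans
      (mul_le_mul hr1 hQn (norm_nonneg _) (by positivity))) hPn (norm_nonneg _) ?_
    positivity
  -- triangle inequality over the ten terms
  have hbig : ‖(Q - ∑ k ∈ Finset.range 5, (k.factorial : ℂ)⁻¹ • A ^ k)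
        - (S - ∑ k ∈ Finset.range 5, (k.factorial : ℂ)⁻¹ • (A + B) ^ k)
        - (2 : ℂ)⁻¹ • (B * B)
        - (6 : ℂ)⁻¹ • ((A + B) ^ 3 - A ^ 3)
        - (24 : ℂ)⁻¹ • ((A + B) ^ 4 - A ^ 4)
        + B' * (Q - 1 - A) + (Q - 1 - A) * B'
        + B' * Q * B'
        + (Q + B' * Q) * (P - 1 - B')
        + (P - 1 - B') * Q * P‖
      ≤ a ^ 5 * 3 + (a + b) ^ 5 * 9 + (1 / 2) * b ^ 2 + (1 / 2) * ((a + b) ^ 2 * b)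
        + (1 / 6) * ((a + b) ^ 3 * b) + (b / 2) * (a ^ 2 * 3) + (a ^ 2 * 3) * (b / 2)
        + (b / 2) * 3 * (b / 2) + (3 + (b / 2) * 3) * ((b / 2) ^ 2 * 3)
        + (b / 2) ^ 2 * 3 * 3 * 3 := by
    refine (norm_add_le _ _).trans (add_le_add ?_ nb10)
    refine (norm_add_le _ _).trans (add_le_add ?_ nb9)
    refine (norm_add_le _ _).trans (add_le_add ?_ nb8)
    refine (norm_add_le _ _).trans (add_le_add ?_ nb7)
    refine (norm_add_le _ _).trans (add_le_add ?_ nb6)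
    refine (norm_sub_le _ _).trans (add_le_add ?_ nb5)
    refine (norm_sub_le _ _).trans (add_le_add ?_ nb4)
    refine (norm_sub_le _ _).trans (add_le_add ?_ nb3)
    exact (norm_sub_le _ _).trans (add_le_add htQ htS)
  exact hbig.trans (poly_final a b ha0 ha1 hb0 hb1)

/-- If `X(h) = O(h)` and `Y(h) = O(h³)` as `h → 0⁺`, then the Strang splitting
`exp(Y/2) exp(X) exp(Y/2)` approximates `exp(X+Y)` to fifth order. -/
theorem strang_splitting_fifth_order {n : ℕ} (hn : 1 ≤ n)
    (X Y : ℝ → Matrix (Fin n) (Fin n) ℂ)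
    (hX : X =O[𝓝[>] (0:ℝ)] fun h => h)
    (hY : Y =O[𝓝[>] (0:ℝ)] fun h => h ^ 3) :
    (fun h => exp ((1 / 2 : ℂ) • Y h) * exp (X h) * exp ((1 / 2 : ℂ) • Y h)
        - exp (X h + Y h)) =O[𝓝[>] (0:ℝ)] fun h => h ^ 5 := by
  rw [isBigO_iff] at hX hY ⊢
  obtain ⟨c1, hc1⟩ := hX
  obtain ⟨c2, hc2⟩ := hY
  set C := max 1 (max c1 c2) with hC_def
  have hC1 : (1:ℝ) ≤ C := le_max_left _ _
  have hC0 : (0:ℝ) < C := lt_of_lt_of_le one_pos hC1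
  refine ⟨200 * (C ^ 5 + C ^ 3 + C ^ 2), ?_⟩
  have hsmall : Set.Iio (min 1 C⁻¹) ∈ 𝓝[>] (0:ℝ) :=
    mem_nhdsWithin_of_mem_nhds (Iio_mem_nhds (by positivity))
  filter_upwards [hc1, hc2, self_mem_nhdsWithin, hsmall] with h h1 h2 hpos hlt
  simp only [Set.mem_Iio, lt_min_iff] at hlt
  have hp : (0:ℝ) < h := hpos
  have hle1 : h ≤ 1 := hlt.1.le
  have hCh : C * h ≤ 1 := by
    have := hlt.2
    calc C * h ≤ C * C⁻¹ := mul_le_mul_of_nonneg_left this.le hC0.le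
      _ = 1 := mul_inv_cancel₀ hC0.ne'
  rw [Real.norm_of_nonneg hp.le] at h1
  rw [Real.norm_of_nonneg (by positivity : (0:ℝ) ≤ h ^ 3)] at h2
  have haX : ‖X h‖ ≤ C * h := by
    refine h1.trans (mul_le_mul_of_nonneg_right ?_ hp.le)
    exact (le_max_left c1 c2).trans (le_max_right 1 _)
  have hbY : ‖Y h‖ ≤ C * h ^ 3 := by
    refine h2.trans (mul_le_mul_of_nonneg_right ?_ (by positivity))
    exact (le_max_right c1 c2).trans (le_max_right 1 _)
  have hCh3 : C * h ^ 3 ≤ 1 := by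
    have h31 : h ^ 3 ≤ h := by nlinarith [sq_nonneg h, sq_nonneg (h - 1), mul_pos hp hp]
    calc C * h ^ 3 ≤ C * h := mul_le_mul_of_nonneg_left h31 hC0.le
      _ ≤ 1 := hCh
  have key := key_bound hn (X h) (Y h) (haX.trans hCh) (hbY.trans hCh3)
  refine key.trans ?_
  have e1 : ‖X h‖ ^ 5 ≤ (C * h) ^ 5 := pow_le_pow_left₀ (norm_nonneg _) haX 5
  have e2 : ‖X h‖ ^ 2 * ‖Y h‖ ≤ (C * h) ^ 2 * (C * h ^ 3) :=
    mul_le_mul (pow_le_pow_left₀ (norm_nonneg _) haX 2) hbY (norm_nonneg _) (by positivity)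
  have e3 : ‖Y h‖ ^ 2 ≤ (C * h ^ 3) ^ 2 := pow_le_pow_left₀ (norm_nonneg _) hbY 2
  have h65 : h ^ 6 ≤ h ^ 5 := pow_le_pow_of_le_one hp.le hle1 (by norm_num)
  have hnorm5 : ‖h ^ 5‖ = h ^ 5 := Real.norm_of_nonneg (by positivity)
  rw [hnorm5]
  have hfin : (C * h) ^ 5 + (C * h) ^ 2 * (C * h ^ 3) + (C * h ^ 3) ^ 2
      ≤ (C ^ 5 + C ^ 3 + C ^ 2) * h ^ 5 := by
    have hc2' : (0:ℝ) ≤ C ^ 2 := by positivity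
    have : C ^ 2 * h ^ 6 ≤ C ^ 2 * h ^ 5 := mul_le_mul_of_nonneg_left h65 hc2'
    nlinarith [this]
  calc 200 * (‖X h‖ ^ 5 + ‖X h‖ ^ 2 * ‖Y h‖ + ‖Y h‖ ^ 2)
      ≤ 200 * ((C * h) ^ 5 + (C * h) ^ 2 * (C * h ^ 3) + (C * h ^ 3) ^ 2) := by linarith
    _ ≤ 200 * ((C ^ 5 + C ^ 3 + C ^ 2) * h ^ 5) := by linarith
    _ = 200 * (C ^ 5 + C ^ 3 + C ^ 2) * h ^ 5 := by ring
end
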